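/- Every integer sequence G with gcd(G(1), G(2)) = 1 satisfying G(n+2) = G(n) + G(n+1) is complete mod 6: every residue mod 6 occurs among the G(n). -/
import Mathlib

private def gstep : ZMod 6 × ZMod 6 → ZMod 6 × ZMod 6 := fun p => (p.2, p.1 + p.2)

private lemma gkey : ∀ a b : ZMod 6,
    ¬ (ZMod.castHom (by norm_num : (2:ℕ) ∣ 6) (ZMod 2) a = 0 ∧
       ZMod.castHom (by norm_num : (2:ℕ) ∣ 6) (ZMod 2) b = 0) →
    ¬ (ZMod.castHom (by norm_num : (3:ℕ) ∣ 6) (ZMod 3) a = 0 ∧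
       ZMod.castHom (by norm_num : (3:ℕ) ∣ 6) (ZMod 3) b = 0) →
    ∀ r : ZMod 6, ∃ k, k < 24 ∧ (gstep^[k] (a, b)).1 = r := by decide

theorem gibonacci_complete_mod_6
    (G : ℕ → ℤ) (hab : Int.gcd (G 1) (G 2) = 1)
    (hrec : ∀ n ≥ 1, G (n + 2) = G n + G (n + 1)) :
    ∀ r : ℤ, ∃ n ≥ 1, G n ≡ r [ZMOD 6] := by
  have pairs : ∀ n : ℕ, (((G (n+1) : ZMod 6)), ((G (n+2) : ZMod 6)))
      = gstep^[n] ((G 1 : ZMod 6), (G 2 : ZMod 6)) := by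
    intro n
    induction n with
    | zero => simp
    | succ n ih =>
      rw [Function.iterate_succ_apply', ← ih]
      have h := hrec (n+1) (by omega)
      simp only [gstep, Prod.mk.injEq]
      exact ⟨trivial, by exact_mod_cast congrArg (fun z : ℤ => (z : ZMod 6)) h⟩
  have h2 : ¬ (ZMod.castHom (by norm_num : (2:ℕ) ∣ 6) (ZMod 2) ((G 1 : ZMod 6)) = 0 ∧
       ZMod.castHom (by norm_num : (2:ℕ) ∣ 6) (ZMod 2) ((G 2 : ZMod 6)) = 0) := by
    rintro ⟨h1, h2⟩
    rw [map_intCast] at h1 h2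
    have d1 : (2:ℤ) ∣ G 1 := by
      have := (ZMod.intCast_zmod_eq_zero_iff_dvd (G 1) 2).mp h1
      exact_mod_cast this
    have d2 : (2:ℤ) ∣ G 2 := by
      have := (ZMod.intCast_zmod_eq_zero_iff_dvd (G 2) 2).mp h2
      exact_mod_cast this
    have := Int.dvd_gcd d1 d2
    rw [hab] at this
    norm_num at this
  have h3 : ¬ (ZMod.castHom (by norm_num : (3:ℕ) ∣ 6) (ZMod 3) ((G 1 : ZMod 6)) = 0 ∧
       ZMod.castHom (by norm_num : (3:ℕ) ∣ 6) (ZMod 3) ((G 2 : ZMod 6)) = 0) := by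
    rintro ⟨h1, h2⟩
    rw [map_intCast] at h1 h2
    have d1 : (3:ℤ) ∣ G 1 := by
      have := (ZMod.intCast_zmod_eq_zero_iff_dvd (G 1) 3).mp h1
      exact_mod_cast this
    have d2 : (3:ℤ) ∣ G 2 := by
      have := (ZMod.intCast_zmod_eq_zero_iff_dvd (G 2) 3).mp h2
      exact_mod_cast this
    have := Int.dvd_gcd d1 d2
    rw [hab] at this
    norm_num at this
  intro r
  obtain ⟨k, _, hk⟩ := gkey _ _ h2 h3 (r : ZMod 6)
  refine ⟨k + 1, by omega, ?_⟩
  have : (G (k+1) : ZMod 6) = (r : ZMod 6) := by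
    rw [← hk, ← pairs k]
  exact (ZMod.intCast_eq_intCast_iff _ _ _).mp this
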